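/- Let k be a field, C a coalgebra over k, V₁, V₂ ⊆ C k-subspaces, and D ⊆ C a subcoalgebra. Then (V₁ ∨_C V₂) ∩ D equals the wedge product of V₁ ∩ D and V₂ ∩ D computed in D; explicitly, (V₁ ∨_C V₂) ∩ D = { x ∈ D : Δ(x) ∈ (V₁ ∩ D) ⊗ D + D ⊗ (V₂ ∩ D) }, where the tensor products denote images in C ⊗ C. -/

import Mathlib

open TensorProduct

/-- The image of `V ⊗ W` in `C ⊗ C`, for subspaces `V, W` of `C`. -/
noncomputable def tensorImage {k C : Type*} [Field k] [AddCommGroup C] [Module k C]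
    (V W : Submodule k C) : Submodule k (C ⊗[k] C) :=
  LinearMap.range (TensorProduct.map V.subtype W.subtype)

/-- The wedge product `V ∨ W = Δ⁻¹(V ⊗ C + C ⊗ W)` of two subspaces of a coalgebra `C`. -/
noncomputable def wedge {k C : Type*} [Field k] [AddCommGroup C] [Module k C] [Coalgebra k C]
    (V W : Submodule k C) : Submodule k C :=
  (tensorImage V ⊤ ⊔ tensorImage ⊤ W).comap (Coalgebra.comul (R := k) (A := C))

section Aux
open LinearMap

variable {k C : Type*} [Field k] [AddCommGroup C] [Module k C]

lemma range_map_eq_tensorImage {A B : Type*} [AddCommGroup A] [Module k A]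
    [AddCommGroup B] [Module k B] (f : A →ₗ[k] C) (g : B →ₗ[k] C) :
    LinearMap.range (TensorProduct.map f g) =
      tensorImage (LinearMap.range f) (LinearMap.range g) := by
  rw [tensorImage, TensorProduct.range_map_eq_span_tmul, TensorProduct.range_map_eq_span_tmul]
  congr 1
  ext t
  constructor
  · rintro ⟨a, b, rfl⟩; exact ⟨⟨f a, a, rfl⟩, ⟨g b, b, rfl⟩, rfl⟩
  · rintro ⟨⟨_, a, rfl⟩, ⟨_, b, rfl⟩, rfl⟩; exact ⟨a, b, rfl⟩

lemma tensorImage_mono {V V' W W' : Submodule k C} (h1 : V ≤ V') (h2 : W ≤ W') :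
    tensorImage V W ≤ tensorImage V' W' := by
  rw [tensorImage, tensorImage, TensorProduct.range_map_eq_span_tmul, TensorProduct.range_map_eq_span_tmul]
  apply Submodule.span_mono
  rintro t ⟨m, n, rfl⟩
  exact ⟨⟨m, h1 m.2⟩, ⟨n, h2 n.2⟩, rfl⟩

lemma map_inj_of_inj {A B A' B' : Type*} [AddCommGroup A] [Module k A]
    [AddCommGroup B] [Module k B] [AddCommGroup A'] [Module k A'] [AddCommGroup B'] [Module k B']
    {f : A →ₗ[k] A'} {g : B →ₗ[k] B'} (hf : Function.Injective f) (hg : Function.Injective g) :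
    Function.Injective (TensorProduct.map f g) := by
  rw [← lTensor_comp_rTensor, coe_comp]
  exact (Module.Flat.lTensor_preserves_injective_linearMap g hg).comp
    (Module.Flat.rTensor_preserves_injective_linearMap f hf)

lemma key_lemma (V₁ V₂ D : Submodule k C) :
    (tensorImage V₁ ⊤ ⊔ tensorImage ⊤ V₂) ⊓ tensorImage D D =
      tensorImage (V₁ ⊓ D) D ⊔ tensorImage D (V₂ ⊓ D) := by
  set p := V₁.mkQ with hp
  set q := V₂.mkQ with hq
  -- step 1: LHS sup is a kernel
  have h1 : tensorImage V₁ ⊤ ⊔ tensorImage ⊤ V₂ = LinearMap.ker (TensorProduct.map p q) := by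
    rw [TensorProduct.map_ker (LinearMap.exact_subtype_ker_map p) (Submodule.mkQ_surjective V₁)
      (LinearMap.exact_subtype_ker_map q) (Submodule.mkQ_surjective V₂)]
    have e1 : lTensor C (LinearMap.ker q).subtype = TensorProduct.map LinearMap.id (LinearMap.ker q).subtype := rfl
    have e2 : rTensor C (LinearMap.ker p).subtype = TensorProduct.map (LinearMap.ker p).subtype LinearMap.id := rfl
    rw [e1, e2, range_map_eq_tensorImage, range_map_eq_tensorImage,
      Submodule.range_subtype, Submodule.range_subtype, Submodule.ker_mkQ, Submodule.ker_mkQ,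
      LinearMap.range_id, sup_comm]
  have hDD : tensorImage D D = LinearMap.range (TensorProduct.map D.subtype D.subtype) := rfl
  set incl := TensorProduct.map D.subtype D.subtype with hincl
  rw [h1, hDD, inf_comm, ← Submodule.map_comap_eq, ← LinearMap.ker_comp,
    ← TensorProduct.map_comp]
  -- kernels inside D ⊗ D
  set K₁ : Submodule k D := LinearMap.ker (p.comp D.subtype) with hK₁
  set K₂ : Submodule k D := LinearMap.ker (q.comp D.subtype) with hK₂
  have hfac₁ : p.comp D.subtype = (K₁.liftQ (p.comp D.subtype) le_rfl).comp K₁.mkQ := by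
    ext x; simp
  have hfac₂ : q.comp D.subtype = (K₂.liftQ (q.comp D.subtype) le_rfl).comp K₂.mkQ := by
    ext x; simp
  have hinj : Function.Injective
      (TensorProduct.map (K₁.liftQ (p.comp D.subtype) le_rfl)
        (K₂.liftQ (q.comp D.subtype) le_rfl)) := by
    apply map_inj_of_inj
    · rw [← LinearMap.ker_eq_bot, Submodule.ker_liftQ_eq_bot _ _ _ le_rfl]
    · rw [← LinearMap.ker_eq_bot, Submodule.ker_liftQ_eq_bot _ _ _ le_rfl]
  have h2 : LinearMap.ker (TensorProduct.map (p.comp D.subtype) (q.comp D.subtype)) =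
      LinearMap.ker (TensorProduct.map K₁.mkQ K₂.mkQ) := by
    rw [hfac₁, hfac₂, TensorProduct.map_comp, LinearMap.ker_comp,
      LinearMap.ker_eq_bot.2 hinj, Submodule.comap_bot]
  rw [h2, TensorProduct.map_ker (LinearMap.exact_subtype_ker_map K₁.mkQ)
    (Submodule.mkQ_surjective K₁) (LinearMap.exact_subtype_ker_map K₂.mkQ)
    (Submodule.mkQ_surjective K₂), Submodule.ker_mkQ, Submodule.ker_mkQ,
    Submodule.map_sup]
  have e3 : lTensor D K₂.subtype = TensorProduct.map LinearMap.id K₂.subtype := rfl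
  have e4 : rTensor D K₁.subtype = TensorProduct.map K₁.subtype LinearMap.id := rfl
  have hK₁' : Submodule.map D.subtype K₁ = V₁ ⊓ D := by
    rw [hK₁, LinearMap.ker_comp, Submodule.ker_mkQ, Submodule.map_comap_eq,
      Submodule.range_subtype, inf_comm]
  have hK₂' : Submodule.map D.subtype K₂ = V₂ ⊓ D := by
    rw [hK₂, LinearMap.ker_comp, Submodule.ker_mkQ, Submodule.map_comap_eq,
      Submodule.range_subtype, inf_comm]
  rw [e3, e4, ← LinearMap.range_comp, ← LinearMap.range_comp, hincl,
    ← TensorProduct.map_comp, ← TensorProduct.map_comp, range_map_eq_tensorImage,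
    range_map_eq_tensorImage]
  simp only [LinearMap.range_comp, LinearMap.range_id, Submodule.map_top,
    Submodule.range_subtype, hK₁', hK₂']
  exact sup_comm _ _

end Aux

/-- If `D` is a subcoalgebra of `C`, then `(V₁ ∨_C V₂) ∩ D` equals the wedge product of
`V₁ ∩ D` and `V₂ ∩ D` computed inside `D`, namely
`{x ∈ D | Δ x ∈ (V₁ ∩ D) ⊗ D + D ⊗ (V₂ ∩ D)}`. -/
theorem wedge_inf_subcoalgebra {k C : Type*} [Field k] [AddCommGroup C] [Module k C]
    [Coalgebra k C] (V₁ V₂ D : Submodule k C)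
    (hD : D ≤ (tensorImage D D).comap (Coalgebra.comul (R := k) (A := C))) :
    wedge V₁ V₂ ⊓ D =
      D ⊓ (tensorImage (V₁ ⊓ D) D ⊔ tensorImage D (V₂ ⊓ D)).comap
        (Coalgebra.comul (R := k) (A := C)) := by
  ext x
  simp only [Submodule.mem_inf, wedge, Submodule.mem_comap]
  constructor
  · rintro ⟨hx, hxD⟩
    refine ⟨hxD, ?_⟩
    have h2 : Coalgebra.comul (R := k) x ∈
        (tensorImage V₁ ⊤ ⊔ tensorImage ⊤ V₂) ⊓ tensorImage D D := ⟨hx, hD hxD⟩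
    rwa [key_lemma] at h2
  · rintro ⟨hxD, hx⟩
    exact ⟨SetLike.le_def.1 (sup_le_sup (tensorImage_mono inf_le_left le_top)
      (tensorImage_mono le_top inf_le_left)) hx, hxD⟩
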